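/- Let A → Q be a Lie algebroid, D ⊆ A a subbundle with orthogonal projector P : A → D relative to a bundle metric, d^A the Lie algebroid differential, and I(D^0) the algebraic ideal generated by the annihilator D^0 of D (sections of Λ^k A* vanishing when all arguments lie in D). Then the map α ↦ P* ∘ α is a bijection from {α ∈ Γ(D*) : d^D α = 0} onto {α̃ ∈ Γ((D^⊥)^0) : d^A α̃ ∈ I(D^0)}, with inverse α̃ ↦ i_D* ∘ α̃. Moreover, for f ∈ C^∞(Q), d^D f = 0 if and only if (d^A f)(q) ∈ D^0_q for all q ∈ Q. -/
import Mathlib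


/- STATEMENT 19.
A → Q is a Lie algebroid (bracket ⟦·,·⟧_A on sections, anchor ρ_A acting on
functions); D ⊆ A a subbundle (inclusion i) with bundle metric G and orthogonal
projector P : A → D, so A = D ⊕ D^⊥. The nonholonomic skew-symmetric algebroid
on D is ⟦X,Y⟧_D = P⟦iX,iY⟧_A, ρ_D = ρ_A∘i, with almost differential d^D.
Then α ↦ P*∘α is a bijection from {α ∈ Γ(D*) : d^Dα = 0} onto
{α̃ ∈ Γ((D^⊥)⁰) : d^Aα̃ ∈ I(D⁰)} with inverse α̃ ↦ i_D*∘α̃; and for f ∈ C^∞(Q),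
d^D f = 0 iff (d^A f)(q) ∈ D⁰_q for all q (i.e. d^A f annihilates all sections
of D pointwise).  1-cocycle conditions are expressed by evaluation on sections;
a 2-form lies in the ideal I(D⁰) iff it vanishes whenever both arguments are
sections of D. -/

theorem stmt19 {Q : Type*} (A : Q → Type*) (D : Q → Type*)
    [∀ q, AddCommGroup (A q)] [∀ q, Module ℝ (A q)]
    [∀ q, AddCommGroup (D q)] [∀ q, Module ℝ (D q)]
    -- the Lie algebroid structure on A
    (brA : (∀ q, A q) → (∀ q, A q) → (∀ q, A q))
    (ρA : (∀ q, A q) → (Q → ℝ) → (Q → ℝ))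
    (hskewA : ∀ X Y, brA X Y = - brA Y X)
    (hJacobiA : ∀ X Y Z, brA (brA X Y) Z + brA (brA Y Z) X + brA (brA Z X) Y = 0)
    (hρadd : ∀ X Y f, ρA (X + Y) f = ρA X f + ρA Y f)
    (hρfun : ∀ (g : Q → ℝ) X f, ρA (fun q => g q • X q) f = g * ρA X f)
    (hρder : ∀ X f g, ρA X (f * g) = f * ρA X g + g * ρA X f)
    (hleibnizA : ∀ X Y (f : Q → ℝ),
      brA X (fun q => f q • Y q) = fun q => f q • brA X Y q + ρA X f q • Y q)
    -- the subbundle D (inclusion i) and the metric G with orthogonal projector P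
    (i : ∀ q, D q →ₗ[ℝ] A q) (hiinj : ∀ q, Function.Injective (i q))
    (G : ∀ q, A q →ₗ[ℝ] A q →ₗ[ℝ] ℝ)
    (hGsymm : ∀ q a b, G q a b = G q b a)
    (hGpos : ∀ q a, a ≠ 0 → 0 < G q a a)
    (P : ∀ q, A q →ₗ[ℝ] D q)
    (hPi : ∀ q (d : D q), P q (i q d) = d)
    (hPorth : ∀ q (a : A q) (d : D q), G q (a - i q (P q a)) (i q d) = 0) :
    -- the map α ↦ P*∘α is a bijection between the two sets of 1-cocycles,
    -- with inverse α̃ ↦ i_D*∘α̃: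
    ((∀ α : ∀ q, Module.Dual ℝ (D q),
        -- if d^D α = 0 ...
        (∀ (X Y : ∀ q, D q) (q : Q),
          ρA (fun r => i r (X r)) (fun r => α r (Y r)) q
            - ρA (fun r => i r (Y r)) (fun r => α r (X r)) q
            - α q (P q (brA (fun r => i r (X r)) (fun r => i r (Y r)) q)) = 0) →
        -- ... then P*∘α takes values in (D^⊥)⁰ ...
        ((∀ (q : Q) (a : A q), (∀ d : D q, G q a (i q d) = 0) →
            (α q).comp (P q) a = 0) ∧
         -- ... d^A(P*∘α) ∈ I(D⁰) ...
         (∀ (X Y : ∀ q, D q) (q : Q),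
            ρA (fun r => i r (X r)) (fun r => ((α r).comp (P r)) (i r (Y r))) q
              - ρA (fun r => i r (Y r)) (fun r => ((α r).comp (P r)) (i r (X r))) q
              - ((α q).comp (P q)) (brA (fun r => i r (X r)) (fun r => i r (Y r)) q)
              = 0) ∧
         -- ... and i_D* ∘ (P* ∘ α) = α
         (fun q => ((α q).comp (P q)).comp (i q)) = α)) ∧
     (∀ αt : ∀ q, Module.Dual ℝ (A q),
        -- if α̃ takes values in (D^⊥)⁰ and d^Aα̃ ∈ I(D⁰) ...
        (∀ (q : Q) (a : A q), (∀ d : D q, G q a (i q d) = 0) → αt q a = 0) →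
        (∀ (X Y : ∀ q, D q) (q : Q),
          ρA (fun r => i r (X r)) (fun r => αt r (i r (Y r))) q
            - ρA (fun r => i r (Y r)) (fun r => αt r (i r (X r))) q
            - αt q (brA (fun r => i r (X r)) (fun r => i r (Y r)) q) = 0) →
        -- ... then i_D*∘α̃ satisfies d^D(i_D*∘α̃) = 0 ...
        ((∀ (X Y : ∀ q, D q) (q : Q),
            ρA (fun r => i r (X r)) (fun r => ((αt r).comp (i r)) (Y r)) q
              - ρA (fun r => i r (Y r)) (fun r => ((αt r).comp (i r)) (X r)) q
              - ((αt q).comp (i q))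
                  (P q (brA (fun r => i r (X r)) (fun r => i r (Y r)) q)) = 0) ∧
         -- ... and P* ∘ (i_D* ∘ α̃) = α̃
         (fun q => ((αt q).comp (i q)).comp (P q)) = αt))) ∧
    -- moreover, for f ∈ C^∞(Q): d^D f = 0 ⟺ (d^A f)(q) ∈ D⁰_q for all q
    (∀ f : Q → ℝ,
      (∀ X : ∀ q, D q, ρA (fun r => i r (X r)) f = 0) ↔
      (∀ (X : ∀ q, D q) (q : Q), ρA (fun r => i r (X r)) f q = 0)) := by

  -- key lemma: if a ⊥ D then P q a = 0
  have hPker : ∀ (q : Q) (a : A q), (∀ d : D q, G q a (i q d) = 0) → P q a = 0 := by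
    intro q a ha
    by_contra hne
    have hi : i q (P q a) ≠ 0 := fun h => hne (hiinj q (by simpa using h))
    have h1 := hPorth q a (P q a)
    have h2 := ha (P q a)
    have : G q (i q (P q a)) (i q (P q a)) = 0 := by
      have := h1
      simp only [map_sub, LinearMap.sub_apply] at this
      linarith [h2]
    exact absurd this (ne_of_gt (hGpos q _ hi))
  -- key lemma: if αt vanishes on D^⊥ then αt (i (P a)) = αt a
  have hproj : ∀ (αt : ∀ q, Module.Dual ℝ (A q)),
      (∀ (q : Q) (a : A q), (∀ d : D q, G q a (i q d) = 0) → αt q a = 0) →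
      ∀ (q : Q) (a : A q), αt q (i q (P q a)) = αt q a := by
    intro αt h q a
    have h0 : αt q (a - i q (P q a)) = 0 := h q _ (fun d => hPorth q a d)
    have := map_sub (αt q) a (i q (P q a))
    rw [h0] at this
    linarith
  refine ⟨⟨?_, ?_⟩, ?_⟩
  · intro α hα
    refine ⟨?_, ?_, ?_⟩
    · intro q a ha
      simp [LinearMap.comp_apply, hPker q a ha]
    · intro X Y q
      have := hα X Y q
      simpa [LinearMap.comp_apply, hPi] using this
    · funext q
      apply LinearMap.ext
      intro d
      simp [LinearMap.comp_apply, hPi]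
  · intro αt h1 h2
    constructor
    · intro X Y q
      have := h2 X Y q
      have hp := hproj αt h1 q (brA (fun r => i r (X r)) (fun r => i r (Y r)) q)
      simp only [LinearMap.comp_apply]
      rw [hp]
      exact this
    · funext q
      apply LinearMap.ext
      intro a
      simp only [LinearMap.comp_apply]
      exact hproj αt h1 q a
  · intro f
    constructor
    · intro h X q; rw [h X]; rfl
    · intro h X; funext q; exact h X q
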